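/- Let z be a real random variable with the logistic density p(z) = sigm(z)(1 - sigm(z)). For a fixed real number a, define h = max(0, z + a). Then E[h] = softplus(a) = log(1 + exp(a)). -/

import Mathlib

noncomputable def sigm (x : ℝ) : ℝ := (1 + Real.exp (-x))⁻¹

open Real MeasureTheory Set Filter Topology

lemma one_add_exp_pos (x : ℝ) : 0 < 1 + Real.exp x := by positivity

lemma hasDerivAt_sigm (x : ℝ) : HasDerivAt sigm (sigm x * (1 - sigm x)) x := by
  have h1 : HasDerivAt (fun z : ℝ => 1 + Real.exp (-z)) (-Real.exp (-x)) x := by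
    have := ((Real.hasDerivAt_exp (-x)).comp x (hasDerivAt_neg x)).const_add 1
    simpa using this
  have hne : (1 + Real.exp (-x)) ≠ 0 := (one_add_exp_pos (-x)).ne'
  have : HasDerivAt sigm _ x := h1.inv hne
  convert this using 1
  unfold sigm
  field_simp
  ring

lemma hasDerivAt_logexp (x : ℝ) :
    HasDerivAt (fun z : ℝ => Real.log (1 + Real.exp (-z))) (sigm x - 1) x := by
  have h1 : HasDerivAt (fun z : ℝ => 1 + Real.exp (-z)) (-Real.exp (-x)) x := by
    have := ((Real.hasDerivAt_exp (-x)).comp x (hasDerivAt_neg x)).const_add 1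
    simpa using this
  have hne : (1 + Real.exp (-x)) ≠ 0 := (one_add_exp_pos (-x)).ne'
  have := h1.log hne
  convert this using 1
  unfold sigm
  field_simp
  ring

/-- For logistic noise `z` and `h = max 0 (z + a)`, the expectation
`E[h] = ∫ max 0 (z+a) · sigm z (1 - sigm z) dz` equals `softplus a = log (1 + exp a)`. -/
theorem noisy_rectifier_expectation (a : ℝ) :
    ∫ z : ℝ, max 0 (z + a) * (sigm z * (1 - sigm z)) = Real.log (1 + Real.exp a) := by
  set G : ℝ → ℝ := fun z => (z + a) * (sigm z - 1) - Real.log (1 + Real.exp (-z)) with hG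
  have sigm_lt_one : ∀ x : ℝ, sigm x < 1 := by
    intro x
    rw [sigm, inv_lt_one_iff₀]
    right; linarith [Real.exp_pos (-x)]
  have sigm_pos : ∀ x : ℝ, 0 < sigm x := fun x => inv_pos.2 (one_add_exp_pos (-x))
  -- derivative of G
  have hderiv : ∀ x : ℝ, HasDerivAt G ((x + a) * (sigm x * (1 - sigm x))) x := by
    intro x
    have h1 : HasDerivAt (fun z : ℝ => (z + a) * (sigm z - 1))
        (1 * (sigm x - 1) + (x + a) * (sigm x * (1 - sigm x))) x :=
      ((hasDerivAt_id x).add_const a).mul ((hasDerivAt_sigm x).sub_const 1)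
    have : HasDerivAt G _ x := h1.sub (hasDerivAt_logexp x)
    convert this using 1
    ring
  -- limit of G at infinity
  have hlim : Tendsto G atTop (𝓝 0) := by
    have h1 : Tendsto (fun z : ℝ => (z + a) * (sigm z - 1)) atTop (𝓝 0) := by
      have e1 : ∀ z : ℝ, (z + a) * (sigm z - 1)
          = -(((z + a) * Real.exp (-z)) * sigm z) := by
        intro z
        have hne : (1 + Real.exp (-z)) ≠ 0 := (one_add_exp_pos (-z)).ne'
        rw [sigm]
        field_simp
        ring
      have h2 : Tendsto (fun z : ℝ => (z + a) * Real.exp (-z)) atTop (𝓝 0) := by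
        have hb : Tendsto (fun z : ℝ => z * Real.exp (-z) + a * Real.exp (-z))
            atTop (𝓝 (0 + 0)) := by
          refine Tendsto.add ?_ ?_
          · simpa using Real.tendsto_pow_mul_exp_neg_atTop_nhds_zero 1
          · simpa using (Real.tendsto_exp_neg_atTop_nhds_zero).const_mul a
        simpa [add_mul] using hb
      have h3 : Tendsto sigm atTop (𝓝 1) := by
        have : Tendsto (fun z : ℝ => 1 + Real.exp (-z)) atTop (𝓝 (1 + 0)) :=
          tendsto_const_nhds.add Real.tendsto_exp_neg_atTop_nhds_zero
        have := this.inv₀ (by norm_num)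
        rw [show sigm = fun z => (1 + Real.exp (-z))⁻¹ from rfl]
        simpa using this
      have := (h2.mul h3).neg
      simpa only [← e1, zero_mul, neg_zero] using this
    have h2 : Tendsto (fun z : ℝ => Real.log (1 + Real.exp (-z))) atTop (𝓝 0) := by
      have : Tendsto (fun z : ℝ => 1 + Real.exp (-z)) atTop (𝓝 (1 + 0)) :=
        tendsto_const_nhds.add Real.tendsto_exp_neg_atTop_nhds_zero
      have := (Real.continuousAt_log (by norm_num)).tendsto.comp this
      simpa [Function.comp_def] using this
    simpa using h1.sub h2
  -- reduce to Ioi (-a)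
  have hsupp : ∀ z : ℝ, z ∉ Ioi (-a) → max 0 (z + a) * (sigm z * (1 - sigm z)) = 0 := by
    intro z hz
    simp only [mem_Ioi, not_lt] at hz
    have : max 0 (z + a) = 0 := max_eq_left (by linarith)
    rw [this, zero_mul]
  rw [← setIntegral_eq_integral_of_forall_compl_eq_zero hsupp]
  have hcongr : ∫ z in Ioi (-a), max 0 (z + a) * (sigm z * (1 - sigm z))
      = ∫ z in Ioi (-a), (z + a) * (sigm z * (1 - sigm z)) := by
    refine setIntegral_congr_fun measurableSet_Ioi ?_
    intro z hz
    simp only [mem_Ioi] at hz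
    have h0 : (0:ℝ) ≤ z + a := by linarith
    simp [max_eq_right h0]
  rw [hcongr]
  have hnonneg : ∀ x ∈ Ioi (-a), 0 ≤ (x + a) * (sigm x * (1 - sigm x)) := by
    intro x hx
    simp only [mem_Ioi] at hx
    have h1 : (0:ℝ) ≤ x + a := by linarith
    exact mul_nonneg h1 (mul_nonneg (sigm_pos x).le (by linarith [sigm_lt_one x]))
  have hcont : ContinuousWithinAt G (Ici (-a)) (-a) :=
    (hderiv (-a)).continuousAt.continuousWithinAt
  have key := integral_Ioi_of_hasDerivAt_of_nonneg hcont (fun x _ => hderiv x) hnonneg hlim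
  rw [key, hG]
  simp [Real.exp_neg, neg_neg]
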